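/- arXiv:2506.18444 — 6 statements merged into one kernel-verified Lean document; each statement's English description precedes it below -/
import Mathlib

section
/- Let μ and ν be probability distributions on a finite set Ω and let 0 ≤ t ≤ 1/4. If (1-t)·ν(x) ≤ μ(x) ≤ (1+t)·ν(x) for every x ∈ Ω, then D_KL(μ ‖ ν) ≤ t²/ln 2. -/
/-- If `(1-t)ν(x) ≤ μ(x) ≤ (1+t)ν(x)` pointwise with `0 ≤ t ≤ 1/4`, then
    `D_KL(μ ‖ ν) ≤ t² / ln 2` (KL divergence in bits). -/
theorem dkl_le_of_bounded_ratio {Ω : Type*} [Fintype Ω] (μ ν : Ω → ℝ) (t : ℝ)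
    (ht0 : 0 ≤ t) (ht1 : t ≤ 1/4)
    (hμ0 : ∀ x, 0 ≤ μ x) (hμ1 : ∑ x, μ x = 1)
    (hν0 : ∀ x, 0 ≤ ν x) (hν1 : ∑ x, ν x = 1)
    (hlo : ∀ x, (1 - t) * ν x ≤ μ x) (hhi : ∀ x, μ x ≤ (1 + t) * ν x) :
    ∑ x, μ x * Real.logb 2 (μ x / ν x) ≤ t ^ 2 / Real.log 2 := by
  have hlog2 : (0:ℝ) < Real.log 2 := Real.log_pos (by norm_num)
  have key : ∀ x, μ x * Real.log (μ x / ν x) ≤ (μ x - ν x) + t ^ 2 * ν x := by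
    intro x
    rcases eq_or_lt_of_le (hν0 x) with h | hν
    · have hμ : μ x = 0 := le_antisymm (by have := hhi x; rw [← h] at this; simpa using this) (hμ0 x)
      simp [hμ, ← h]
    · have hμ : 0 < μ x := by nlinarith [hlo x]
      have hy : 0 < μ x / ν x := div_pos hμ hν
      have hlog := Real.log_le_sub_one_of_pos hy
      have h1 : μ x * Real.log (μ x / ν x) ≤ μ x * (μ x / ν x - 1) :=
        mul_le_mul_of_nonneg_left hlog (hμ0 x)
      have h2 : μ x * (μ x / ν x - 1) = (μ x - ν x) + (μ x - ν x) ^ 2 / ν x := by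
        field_simp; ring
      have h3 : (μ x - ν x) ^ 2 / ν x ≤ t ^ 2 * ν x := by
        rw [div_le_iff₀ hν]
        nlinarith [hlo x, hhi x]
      linarith
  have hsum : ∑ x, μ x * Real.log (μ x / ν x) ≤ t ^ 2 := by
    calc ∑ x, μ x * Real.log (μ x / ν x) ≤ ∑ x, ((μ x - ν x) + t ^ 2 * ν x) :=
          Finset.sum_le_sum fun x _ => key x
      _ = t ^ 2 := by
          rw [Finset.sum_add_distrib, Finset.sum_sub_distrib, hμ1, hν1, ← Finset.mul_sum, hν1]
          ring
  have heq : ∑ x, μ x * Real.logb 2 (μ x / ν x)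
      = (∑ x, μ x * Real.log (μ x / ν x)) / Real.log 2 := by
    rw [Finset.sum_div]
    apply Finset.sum_congr rfl
    intros x _
    simp only [Real.logb]
    ring
  rw [heq]
  exact div_le_div_of_nonneg_right hsum hlog2.le
end

section
/- Let μ and ν be probability distributions on a finite set Ω with the same support. Then Σ_{x∈Ω} (μ(x)-ν(x))²/(μ(x)+ν(x)) ≤ (D_KL(μ ‖ ν) + D_KL(ν ‖ μ)) · ln 2, where terms with μ(x)+ν(x)=0 are interpreted as 0. -/
lemma ptwise_tri (a b : ℝ) (ha : 0 < a) (hb : 0 < b) :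
    (a - b) ^ 2 / (a + b) ≤ a * Real.log (a / b) + b * Real.log (b / a) := by
  set L := Real.log (a / b) with hL
  have hba : Real.log (b / a) = -L := by
    rw [hL, Real.log_div hb.ne' ha.ne', Real.log_div ha.ne' hb.ne']; ring
  have h1 : L ≤ a / b - 1 := Real.log_le_sub_one_of_pos (div_pos ha hb)
  have h2 : -L ≤ b / a - 1 := by
    rw [← hba]; exact Real.log_le_sub_one_of_pos (div_pos hb ha)
  have h1' : b * L ≤ a - b := by
    have : L ≤ (a - b) / b := by rw [sub_div, div_self hb.ne']; linarith
    have := (le_div_iff₀ hb).mp this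
    linarith
  have h2' : a - b ≤ a * L := by
    have : -L ≤ (b - a) / a := by rw [sub_div, div_self ha.ne']; linarith
    have := (le_div_iff₀ ha).mp this
    linarith
  rw [hba, div_le_iff₀ (by linarith)]
  nlinarith [mul_nonneg (by linarith : (0:ℝ) ≤ a * L - (a - b)) (by linarith : (0:ℝ) ≤ (a - b) - b * L),
    mul_nonneg (mul_nonneg ha.le hb.le) (sq_nonneg L)]

/-- The symmetric χ²-like (triangular) discrimination is bounded by
    `(D_KL(μ ‖ ν) + D_KL(ν ‖ μ)) · ln 2` (KL divergences in bits), for distributions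
    with the same support.  (Terms with `μ(x)+ν(x)=0` are `0` by Lean's `x/0 = 0`.) -/
theorem triangular_le_symm_dkl {Ω : Type*} [Fintype Ω] (μ ν : Ω → ℝ)
    (hμ0 : ∀ x, 0 ≤ μ x) (hμ1 : ∑ x, μ x = 1)
    (hν0 : ∀ x, 0 ≤ ν x) (hν1 : ∑ x, ν x = 1)
    (hsupp : ∀ x, μ x = 0 ↔ ν x = 0) :
    ∑ x, (μ x - ν x) ^ 2 / (μ x + ν x)
      ≤ (∑ x, μ x * Real.logb 2 (μ x / ν x) + ∑ x, ν x * Real.logb 2 (ν x / μ x))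
          * Real.log 2 := by
  have h2 : Real.log 2 ≠ 0 := ne_of_gt (Real.log_pos (by norm_num))
  have hrw : (∑ x, μ x * Real.logb 2 (μ x / ν x) + ∑ x, ν x * Real.logb 2 (ν x / μ x))
      * Real.log 2 = ∑ x, (μ x * Real.log (μ x / ν x) + ν x * Real.log (ν x / μ x)) := by
    rw [add_mul, Finset.sum_mul, Finset.sum_mul, ← Finset.sum_add_distrib]
    refine Finset.sum_congr rfl fun x _ => ?_
    simp only [Real.logb]
    field_simp
  rw [hrw]
  refine Finset.sum_le_sum fun x _ => ?_
  rcases eq_or_lt_of_le (hμ0 x) with hμ | hμ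
  · have hν : ν x = 0 := (hsupp x).mp hμ.symm
    simp [← hμ, hν]
  · have hν : 0 < ν x := lt_of_le_of_ne (hν0 x) fun h => (hμ.ne' ((hsupp x).mpr h.symm))
    exact ptwise_tri (μ x) (ν x) hμ hν
end

section
/- Let μ and ν be probability distributions on a finite set Ω and let |r| < 1/2. Then D_KL( (1/2)μ + (1/2)ν ‖ ((1+r)/2)μ + ((1-r)/2)ν ) ≤ (r²/2)·(D_KL(μ ‖ ν) + D_KL(ν ‖ μ)). -/
/-- `x - x² ≤ log(1+x)` for `|x| < 1/2`. -/
lemma log_one_add_ge {x : ℝ} (hx : |x| < 1/2) : x - x^2 ≤ Real.log (1+x) := by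
  obtain ⟨hx1, hx2⟩ := abs_lt.mp hx
  have h1 : (0:ℝ) < 1 + x := by linarith
  rcases le_or_gt 0 x with h | h
  · have hlog := Real.one_sub_inv_le_log_of_pos h1
    have hinv : 1 - (1+x)⁻¹ = x/(1+x) := by field_simp; ring
    have h2 : x - x^2 ≤ x/(1+x) := by
      rw [le_div_iff₀ h1]; nlinarith
    rw [hinv] at hlog; linarith
  · set y : ℝ := -x with hy
    have hy0 : 0 ≤ y := by simp [hy]; linarith
    have hy2 : y < 1/2 := by simp [hy]; linarith
    set t : ℝ := y + y^2 with ht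
    have ht0 : 0 ≤ t := by positivity
    have hcub : 1 + t + t^2/2 + t^3/6 ≤ Real.exp t := by
      have := Real.sum_le_exp_of_nonneg ht0 4
      norm_num [Finset.sum_range_succ, Nat.factorial] at this
      linarith
    have hexp : Real.exp (x - x^2) ≤ 1 + x := by
      have hxy : x - x^2 = -t := by rw [ht, hy]; ring
      rw [hxy, Real.exp_neg]
      have h1y : (0:ℝ) < 1 - y := by linarith
      have hgoal : (1:ℝ) ≤ (1 + t + t^2/2 + t^3/6) * (1 - y) := by
        rw [ht]; nlinarith [sq_nonneg y, pow_nonneg hy0 3, pow_nonneg hy0 4, pow_nonneg hy0 5,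
          mul_nonneg (pow_nonneg hy0 3) (by linarith : (0:ℝ) ≤ 1/2 - y),
          mul_nonneg (pow_nonneg hy0 4) (by linarith : (0:ℝ) ≤ 1/2 - y)]
      have h1x : 1 + x = 1 - y := by rw [hy]; ring
      rw [h1x, inv_le_iff_one_le_mul₀' (Real.exp_pos t)]
      calc (1:ℝ) ≤ (1 + t + t^2/2 + t^3/6) * (1 - y) := hgoal
        _ ≤ Real.exp t * (1 - y) := by nlinarith
    exact (Real.le_log_iff_exp_le h1).mpr hexp

/-- `(a-b)²/(a+b) ≤ (a-b)·log(a/b)` for positive `a, b`. -/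
lemma chi_le_symkl {a b : ℝ} (ha : 0 < a) (hb : 0 < b) :
    (a-b)^2/(a+b) ≤ (a-b) * Real.log (a/b) := by
  wlog hab : b ≤ a generalizing a b
  · have h := this hb ha (le_of_not_ge hab)
    have e1 : (b-a)^2/(b+a) = (a-b)^2/(a+b) := by rw [add_comm b a]; ring_nf
    have e2 : (b-a) * Real.log (b/a) = (a-b) * Real.log (a/b) := by
      rw [Real.log_div hb.ne' ha.ne', Real.log_div ha.ne' hb.ne']; ring
    rw [e1, e2] at h; exact h
  · have hlog : (a-b)/a ≤ Real.log (a/b) := by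
      have := Real.one_sub_inv_le_log_of_pos (div_pos ha hb)
      have e : 1 - (a/b)⁻¹ = (a-b)/a := by field_simp
      rwa [e] at this
    have h1 : (a-b)^2/(a+b) ≤ (a-b)^2/a :=
      div_le_div_of_nonneg_left (sq_nonneg _) ha (by linarith)
    have h2 : (a-b)^2/a ≤ (a-b) * Real.log (a/b) := by
      have := mul_le_mul_of_nonneg_left hlog (by linarith : (0:ℝ) ≤ a - b)
      calc (a-b)^2/a = (a-b) * ((a-b)/a) := by ring
        _ ≤ (a-b) * Real.log (a/b) := this
    linarith

lemma point_bound {r a b : ℝ} (hr : |r| < 1/2) (ha : 0 < a) (hb : 0 < b) :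
    (1/2*a + 1/2*b) * Real.logb 2 ((1/2*a + 1/2*b)/((1+r)/2*a + (1-r)/2*b))
    ≤ (-(r*(a-b))/2 + r^2*(a-b)^2/(2*(a+b))) / Real.log 2 := by
  obtain ⟨hr1, hr2⟩ := abs_lt.mp hr
  have hab : (0:ℝ) < a + b := by linarith
  set X : ℝ := r*(a-b)/(a+b) with hX
  have habs : |a - b| ≤ a + b := abs_le.mpr ⟨by linarith, by linarith⟩
  have hXlt : |X| < 1/2 := by
    rw [hX, abs_div, abs_of_pos hab, div_lt_iff₀ hab, abs_mul]
    calc |r| * |a-b| ≤ |r| * (a+b) := mul_le_mul_of_nonneg_left habs (abs_nonneg r)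
      _ < 1/2 * (a+b) := mul_lt_mul_of_pos_right hr hab
  have h1X : (0:ℝ) < 1 + X := by
    have := (abs_lt.mp hXlt).1; linarith
  have hm : (0:ℝ) < 1/2*a + 1/2*b := by linarith
  have hs : (0:ℝ) < (1+r)/2*a + (1-r)/2*b := by nlinarith
  have hratio : (1/2*a + 1/2*b)/((1+r)/2*a + (1-r)/2*b) = (1+X)⁻¹ := by
    rw [hX]; field_simp; ring_nf
  have hlog : Real.log ((1/2*a + 1/2*b)/((1+r)/2*a + (1-r)/2*b)) = -Real.log (1+X) := by
    rw [hratio, Real.log_inv]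
  have hlb : -Real.log (1+X) ≤ X^2 - X := by
    have := log_one_add_ge hXlt; linarith
  have hlog2 : (0:ℝ) < Real.log 2 := Real.log_pos (by norm_num)
  rw [Real.logb, hlog, ← mul_div_assoc]
  have key : (1/2*a+1/2*b)*(X^2 - X) = -(r*(a-b))/2 + r^2*(a-b)^2/(2*(a+b)) := by
    rw [hX]; field_simp; ring
  gcongr
  calc (1/2*a+1/2*b) * (-Real.log (1+X)) ≤ (1/2*a+1/2*b) * (X^2 - X) :=
        mul_le_mul_of_nonneg_left hlb hm.le
    _ = -(r*(a-b))/2 + r^2*(a-b)^2/(2*(a+b)) := key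

/-- `D_KL((μ+ν)/2 ‖ (1+r)/2·μ + (1-r)/2·ν) ≤ (r²/2)(D_KL(μ‖ν)+D_KL(ν‖μ))` for `|r| < 1/2`
    (KL divergences in bits; distributions with common support so the right side is finite). -/
theorem dkl_mixture_bias_le {Ω : Type*} [Fintype Ω] (μ ν : Ω → ℝ) (r : ℝ)
    (hr : |r| < 1/2)
    (hμ0 : ∀ x, 0 ≤ μ x) (hμ1 : ∑ x, μ x = 1)
    (hν0 : ∀ x, 0 ≤ ν x) (hν1 : ∑ x, ν x = 1)
    (hsupp : ∀ x, μ x = 0 ↔ ν x = 0) :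
    ∑ x, ((1:ℝ)/2 * μ x + 1/2 * ν x) *
        Real.logb 2 ((1/2 * μ x + 1/2 * ν x) / ((1 + r)/2 * μ x + (1 - r)/2 * ν x))
      ≤ r ^ 2 / 2 *
        (∑ x, μ x * Real.logb 2 (μ x / ν x) + ∑ x, ν x * Real.logb 2 (ν x / μ x)) := by
  have hlog2 : (0:ℝ) < Real.log 2 := Real.log_pos (by norm_num)
  -- positivity dichotomy at each point
  have hpos : ∀ x : Ω, (μ x = 0 ∧ ν x = 0) ∨ (0 < μ x ∧ 0 < ν x) := by
    intro x
    rcases eq_or_lt_of_le (hμ0 x) with h | h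
    · exact Or.inl ⟨h.symm, (hsupp x).mp h.symm⟩
    · refine Or.inr ⟨h, lt_of_le_of_ne (hν0 x) fun h0 => ?_⟩
      exact absurd ((hsupp x).mpr h0.symm) h.ne'
  -- Step 1: pointwise bound
  have step1 : ∑ x, ((1:ℝ)/2 * μ x + 1/2 * ν x) *
        Real.logb 2 ((1/2 * μ x + 1/2 * ν x) / ((1 + r)/2 * μ x + (1 - r)/2 * ν x))
      ≤ ∑ x, (-(r*(μ x - ν x))/2 + r^2*(μ x - ν x)^2/(2*(μ x + ν x))) / Real.log 2 := by
    apply Finset.sum_le_sum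
    intro x _
    rcases hpos x with ⟨h1, h2⟩ | ⟨h1, h2⟩
    · simp [h1, h2]
    · exact point_bound hr h1 h2
  -- Step 2: the linear part cancels
  have step2 : ∑ x, (-(r*(μ x - ν x))/2 + r^2*(μ x - ν x)^2/(2*(μ x + ν x))) / Real.log 2
      = (r^2/2 * ∑ x, (μ x - ν x)^2/(μ x + ν x)) / Real.log 2 := by
    rw [← Finset.sum_div]
    congr 1
    have e1 : ∀ x : Ω, (-(r*(μ x - ν x))/2 + r^2*(μ x - ν x)^2/(2*(μ x + ν x)))
        = (-(r/2)) * (μ x - ν x) + r^2/2 * ((μ x - ν x)^2/(μ x + ν x)) := by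
      intro x
      rw [mul_comm (2:ℝ) (μ x + ν x), ← div_div]; ring
    rw [Finset.sum_congr rfl fun x _ => e1 x, Finset.sum_add_distrib, ← Finset.mul_sum,
      ← Finset.mul_sum, Finset.sum_sub_distrib, hμ1, hν1]
    ring
  -- Step 3: chi-square ≤ symmetric KL (in nats)
  have step3 : ∑ x, (μ x - ν x)^2/(μ x + ν x) ≤ ∑ x, (μ x - ν x) * Real.log (μ x / ν x) := by
    apply Finset.sum_le_sum
    intro x _
    rcases hpos x with ⟨h1, h2⟩ | ⟨h1, h2⟩
    · simp [h1, h2]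
    · exact chi_le_symkl h1 h2
  -- Step 4: rewrite the RHS
  have step4 : r ^ 2 / 2 *
        (∑ x, μ x * Real.logb 2 (μ x / ν x) + ∑ x, ν x * Real.logb 2 (ν x / μ x))
      = (r^2/2 * ∑ x, (μ x - ν x) * Real.log (μ x / ν x)) / Real.log 2 := by
    rw [← Finset.sum_add_distrib]
    have e : ∀ x : Ω, μ x * Real.logb 2 (μ x / ν x) + ν x * Real.logb 2 (ν x / μ x)
        = ((μ x - ν x) * Real.log (μ x / ν x)) / Real.log 2 := by
      intro x
      rcases hpos x with ⟨h1, h2⟩ | ⟨h1, h2⟩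
      · simp [h1, h2]
      · rw [Real.logb, Real.logb, Real.log_div h1.ne' h2.ne', Real.log_div h2.ne' h1.ne']
        ring
    rw [Finset.sum_congr rfl fun x _ => e x, ← Finset.sum_div, ← mul_div_assoc]
  calc ∑ x, ((1:ℝ)/2 * μ x + 1/2 * ν x) *
        Real.logb 2 ((1/2 * μ x + 1/2 * ν x) / ((1 + r)/2 * μ x + (1 - r)/2 * ν x))
      ≤ (r^2/2 * ∑ x, (μ x - ν x)^2/(μ x + ν x)) / Real.log 2 := step1.trans_eq step2
    _ ≤ (r^2/2 * ∑ x, (μ x - ν x) * Real.log (μ x / ν x)) / Real.log 2 := by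
        gcongr
    _ = r ^ 2 / 2 *
        (∑ x, μ x * Real.logb 2 (μ x / ν x) + ∑ x, ν x * Real.logb 2 (ν x / μ x)) := step4.symm
end

section
/- For n ≥ 1 and 0 < ε < 1/150, setting δ = √2·ε/√n, k_H = n/2 - √3·√n, k_L = n/2 - √6·√n, p_H = 2^{-n}(1+δ)^{k_H}(1-δ)^{n-k_H}, and p_L = 2^{-n}(1+δ)^{k_L}(1-δ)^{n-k_L}, it holds that (1-ε)·p_H > (1+ε)·p_L. -/
set_option maxHeartbeats 1000000


/-- `log x ≥ 1 - x⁻¹` for `x > 0`. -/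
lemma aux_one_sub_inv_le_log {x : ℝ} (hx : 0 < x) : 1 - x⁻¹ ≤ Real.log x := by
  have h := Real.log_le_sub_one_of_pos (inv_pos.mpr hx)
  rw [Real.log_inv] at h
  linarith

/-- With `δ = √2·ε/√n`, `k_H = n/2 - √3·√n`, `k_L = n/2 - √6·√n`,
    `p_H = 2⁻ⁿ(1+δ)^{k_H}(1-δ)^{n-k_H}` and `p_L = 2⁻ⁿ(1+δ)^{k_L}(1-δ)^{n-k_L}`
    (real powers), it holds that `(1-ε)p_H > (1+ε)p_L` for `n ≥ 1`, `0 < ε < 1/150`. -/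
theorem pH_pL_separation (n : ℕ) (ε : ℝ) (hn : 1 ≤ n) (hε0 : 0 < ε) (hε1 : ε < 1/150) :
    let δ : ℝ := Real.sqrt 2 * ε / Real.sqrt n
    let kH : ℝ := (n : ℝ) / 2 - Real.sqrt 3 * Real.sqrt n
    let kL : ℝ := (n : ℝ) / 2 - Real.sqrt 6 * Real.sqrt n
    let pH : ℝ := (2 : ℝ) ^ (-(n : ℝ)) * (1 + δ) ^ kH * (1 - δ) ^ ((n : ℝ) - kH)
    let pL : ℝ := (2 : ℝ) ^ (-(n : ℝ)) * (1 + δ) ^ kL * (1 - δ) ^ ((n : ℝ) - kL)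
    (1 - ε) * pH > (1 + ε) * pL := by
  intro δ kH kL pH pL
  have hn1 : (1 : ℝ) ≤ (n : ℝ) := by exact_mod_cast hn
  have hsn1 : 1 ≤ Real.sqrt n := Real.one_le_sqrt.mpr hn1
  have hsn0 : 0 < Real.sqrt n := lt_of_lt_of_le one_pos hsn1
  -- numeric bounds on square roots
  have s2u : Real.sqrt 2 < 1.41422 := (Real.sqrt_lt' (by norm_num)).mpr (by norm_num)
  have s2l : (1.414 : ℝ) ≤ Real.sqrt 2 := (Real.le_sqrt (by norm_num) (by norm_num)).mpr (by norm_num)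
  have s3l : (1.732 : ℝ) ≤ Real.sqrt 3 := (Real.le_sqrt (by norm_num) (by norm_num)).mpr (by norm_num)
  have s3u : Real.sqrt 3 < 1.7321 := (Real.sqrt_lt' (by norm_num)).mpr (by norm_num)
  have s6l : (2.449 : ℝ) ≤ Real.sqrt 6 := (Real.le_sqrt (by norm_num) (by norm_num)).mpr (by norm_num)
  have s6u : Real.sqrt 6 < 2.4495 := (Real.sqrt_lt' (by norm_num)).mpr (by norm_num)
  have s20 : (0:ℝ) < Real.sqrt 2 := by linarith
  -- basic facts about δ
  have hδ0 : 0 < δ := by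
    have : 0 < Real.sqrt 2 * ε := by positivity
    exact div_pos this hsn0
  have hδle : δ ≤ Real.sqrt 2 * ε := by
    rw [div_le_iff₀ hsn0]
    nlinarith [mul_pos s20 hε0]
  have hδsmall : δ < 1/100 := by nlinarith
  have hx0 : (0:ℝ) < 1 + δ := by linarith
  have hy0 : (0:ℝ) < 1 - δ := by linarith
  -- t = kH - kL
  set t : ℝ := (Real.sqrt 6 - Real.sqrt 3) * Real.sqrt n with ht
  have ht0 : 0 < t := by nlinarith
  have htδ : t * δ = (2 * Real.sqrt 3 - Real.sqrt 6) * ε := by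
    have h26 : Real.sqrt 2 * Real.sqrt 6 = 2 * Real.sqrt 3 := by
      rw [← Real.sqrt_mul (by norm_num : (0:ℝ) ≤ 2) 6]
      rw [show (2:ℝ) * 6 = 2^2 * 3 by norm_num, Real.sqrt_mul (by positivity) 3,
        Real.sqrt_sq (by norm_num)]
    have h23 : Real.sqrt 2 * Real.sqrt 3 = Real.sqrt 6 := by
      rw [← Real.sqrt_mul (by norm_num : (0:ℝ) ≤ 2) 3]; norm_num
    have : t * δ = (Real.sqrt 6 - Real.sqrt 3) * (Real.sqrt 2 * ε) *
        (Real.sqrt n / Real.sqrt n) := by rw [ht]; ring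
    rw [this, div_self (ne_of_gt hsn0)]
    nlinarith [h26, h23]
  -- logarithm bounds
  have la : Real.log (1 + ε) ≤ ε := by
    have := Real.log_le_sub_one_of_pos (show (0:ℝ) < 1 + ε by linarith)
    linarith
  have lb : -(ε / (1 - ε)) ≤ Real.log (1 - ε) := by
    have h := aux_one_sub_inv_le_log (show (0:ℝ) < 1 - ε by linarith)
    have hne : (1 - ε) ≠ 0 := by linarith
    have he : (1 - ε)⁻¹ = 1 + ε / (1 - ε) := by field_simp; ring
    rw [he] at h; linarith
  have lc : δ - δ^2 ≤ Real.log (1 + δ) := by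
    have h := aux_one_sub_inv_le_log hx0
    have hinv : (1 + δ) * (1 + δ)⁻¹ = 1 := mul_inv_cancel₀ (ne_of_gt hx0)
    nlinarith
  have ld : Real.log (1 - δ) ≤ -δ := by
    have := Real.log_le_sub_one_of_pos hy0
    linarith
  -- the key log inequality
  have key : Real.log (1 + ε) + t * Real.log (1 - δ) <
      Real.log (1 - ε) + t * Real.log (1 + δ) := by
    have h1 : t * (Real.log (1 + δ) - Real.log (1 - δ)) ≥ t * δ * (2 - δ) := by
      have hh := mul_le_mul_of_nonneg_left
        (show 2 * δ - δ^2 ≤ Real.log (1+δ) - Real.log (1-δ) by linarith) ht0.le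
      have hr : t * δ * (2 - δ) = t * (2 * δ - δ^2) := by ring
      linarith
    have h2 : t * δ * (2 - δ) ≥ (2 * Real.sqrt 3 - Real.sqrt 6) * ε * (2 - 1.41422/150) := by
      rw [htδ]
      have hc : (0:ℝ) < (2 * Real.sqrt 3 - Real.sqrt 6) * ε := by nlinarith
      have hd : (2:ℝ) - 1.41422/150 ≤ 2 - δ := by nlinarith
      exact mul_le_mul_of_nonneg_left hd hc.le
    have h3 : Real.log (1 + ε) - Real.log (1 - ε) ≤ ε + ε / (1 - ε) := by linarith
    have h4 : ε + ε / (1 - ε) ≤ ε + (150/149) * ε := by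
      have : ε / (1 - ε) ≤ (150/149) * ε := by
        rw [div_le_iff₀ (by linarith : (0:ℝ) < 1 - ε)]; nlinarith
      linarith
    have h5 : ε + (150/149) * ε < (2 * Real.sqrt 3 - Real.sqrt 6) * ε * (2 - 1.41422/150) := by
      have hq : (299/149 : ℝ) < (2 * Real.sqrt 3 - Real.sqrt 6) * (2 - 1.41422/150) := by
        nlinarith
      have := mul_lt_mul_of_pos_right hq hε0
      nlinarith
    linarith
  -- exponentiate: (1+ε)(1-δ)^t < (1-ε)(1+δ)^t
  have hyt : (0:ℝ) < (1 - δ) ^ t := Real.rpow_pos_of_pos hy0 t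
  have hxt : (0:ℝ) < (1 + δ) ^ t := Real.rpow_pos_of_pos hx0 t
  have hmain : (1 + ε) * (1 - δ) ^ t < (1 - ε) * (1 + δ) ^ t := by
    have hA : (0:ℝ) < (1 + ε) * (1 - δ) ^ t := by positivity
    have hB : (0:ℝ) < (1 - ε) * (1 + δ) ^ t := by
      have : (0:ℝ) < 1 - ε := by linarith
      positivity
    have hlog : Real.log ((1 + ε) * (1 - δ) ^ t) < Real.log ((1 - ε) * (1 + δ) ^ t) := by
      rw [Real.log_mul (by linarith) (ne_of_gt hyt),
        Real.log_mul (by linarith) (ne_of_gt hxt),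
        Real.log_rpow hy0, Real.log_rpow hx0]
      linarith
    calc (1 + ε) * (1 - δ) ^ t = Real.exp (Real.log ((1 + ε) * (1 - δ) ^ t)) :=
          (Real.exp_log hA).symm
      _ < Real.exp (Real.log ((1 - ε) * (1 + δ) ^ t)) := Real.exp_lt_exp.mpr hlog
      _ = (1 - ε) * (1 + δ) ^ t := Real.exp_log hB
  -- assemble
  have hC : (0:ℝ) < (2 : ℝ) ^ (-(n : ℝ)) := Real.rpow_pos_of_pos (by norm_num) _
  have hxkL : (0:ℝ) < (1 + δ) ^ kL := Real.rpow_pos_of_pos hx0 kL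
  have hynH : (0:ℝ) < (1 - δ) ^ ((n:ℝ) - kH) := Real.rpow_pos_of_pos hy0 _
  have hP : (0:ℝ) < (2 : ℝ) ^ (-(n : ℝ)) * (1 + δ) ^ kL * (1 - δ) ^ ((n:ℝ) - kH) := by
    positivity
  have hkk : kH = kL + t := by
    rw [ht]
    show (n : ℝ) / 2 - Real.sqrt 3 * Real.sqrt n =
      ((n : ℝ) / 2 - Real.sqrt 6 * Real.sqrt n) + (Real.sqrt 6 - Real.sqrt 3) * Real.sqrt n
    ring
  have ekH : (1 + δ) ^ kH = (1 + δ) ^ kL * (1 + δ) ^ t := by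
    rw [hkk, Real.rpow_add hx0]
  have ekL : (1 - δ) ^ ((n:ℝ) - kL) = (1 - δ) ^ ((n:ℝ) - kH) * (1 - δ) ^ t := by
    rw [← Real.rpow_add hy0]
    congr 1
    rw [hkk]; ring
  calc (1 + ε) * pL
      = ((2 : ℝ) ^ (-(n : ℝ)) * (1 + δ) ^ kL * (1 - δ) ^ ((n:ℝ) - kH)) *
        ((1 + ε) * (1 - δ) ^ t) := by
        show (1 + ε) * ((2 : ℝ) ^ (-(n : ℝ)) * (1 + δ) ^ kL * (1 - δ) ^ ((n:ℝ) - kL)) = _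
        rw [ekL]; ring
    _ < ((2 : ℝ) ^ (-(n : ℝ)) * (1 + δ) ^ kL * (1 - δ) ^ ((n:ℝ) - kH)) *
        ((1 - ε) * (1 + δ) ^ t) := by
        exact mul_lt_mul_of_pos_left hmain hP
    _ = (1 - ε) * pH := by
        show _ = (1 - ε) * ((2 : ℝ) ^ (-(n : ℝ)) * (1 + δ) ^ kH * (1 - δ) ^ ((n:ℝ) - kH))
        rw [ekH]; ring
end

section
/- Let 0 < δ < 1/3 and 0 ≤ r < 1/2. For each i, let τ₋^{(i)} = Bin(m_i, (1-δ)/2), τ₊^{(i)} = Bin(m_i, (1+δ)/2), μ^{(i)} = (1/2)τ₋^{(i)} + (1/2)τ₊^{(i)}, and ν^{(i)} = ((1+r)/2)τ₋^{(i)} + ((1-r)/2)τ₊^{(i)}. Then D_KL( ∏_{i=1}^n μ^{(i)} ‖ ∏_{i=1}^n ν^{(i)} ) ≤ 5·r²·δ²·q, where q = Σ_{i=1}^n m_i. -/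
/-- The probability mass function of the binomial distribution `Bin(m,p)`. -/
def binomPMF (m : ℕ) (p : ℝ) (k : ℕ) : ℝ := (m.choose k : ℝ) * p ^ k * (1 - p) ^ (m - k)

open Finset Real

lemma binomPMF_pos {m k : ℕ} {p : ℝ} (hp0 : 0 < p) (hp1 : p < 1) (hk : k ≤ m) :
    0 < binomPMF m p k := by
  unfold binomPMF
  have hc : 0 < (m.choose k : ℝ) := by
    exact_mod_cast Nat.choose_pos hk
  have h1p : 0 < 1 - p := by linarith
  positivity

lemma binomPMF_sum (m : ℕ) (p : ℝ) : ∑ k : Fin (m + 1), binomPMF m p (k : ℕ) = 1 := by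
  rw [Fin.sum_univ_eq_sum_range (fun k => binomPMF m p k)]
  have h := add_pow p (1 - p) m
  have h1 : p + (1 - p) = 1 := by ring
  rw [h1, one_pow] at h
  rw [h]
  refine Finset.sum_congr rfl fun k _ => ?_
  unfold binomPMF; ring

lemma binomPMF_sqrt_sum (m : ℕ) (δ : ℝ) (hδ0 : 0 ≤ δ) (hδ1 : δ < 1) :
    ∑ k : Fin (m + 1),
        Real.sqrt (binomPMF m ((1 - δ)/2) (k : ℕ) * binomPMF m ((1 + δ)/2) (k : ℕ))
      = Real.sqrt (1 - δ ^ 2) ^ m := by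
  set s := Real.sqrt (1 - δ ^ 2) with hs
  have hδ2 : 0 ≤ 1 - δ ^ 2 := by nlinarith
  have hs0 : 0 ≤ s := Real.sqrt_nonneg _
  have hssq : s ^ 2 = 1 - δ ^ 2 := Real.sq_sqrt hδ2
  have key : ∀ k : Fin (m + 1),
      Real.sqrt (binomPMF m ((1 - δ)/2) (k : ℕ) * binomPMF m ((1 + δ)/2) (k : ℕ))
        = (m.choose (k : ℕ) : ℝ) * (s / 2) ^ m := by
    intro k
    have hk : (k : ℕ) ≤ m := Nat.lt_succ_iff.mp k.isLt
    have h1 : (1 : ℝ) - (1 - δ)/2 = (1 + δ)/2 := by ring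
    have h2 : (1 : ℝ) - (1 + δ)/2 = (1 - δ)/2 := by ring
    have huv : (1 - δ)/2 * ((1 + δ)/2) = (s / 2) ^ 2 := by
      rw [div_pow, hssq]; ring
    have heq : binomPMF m ((1 - δ)/2) (k : ℕ) * binomPMF m ((1 + δ)/2) (k : ℕ)
        = ((m.choose (k : ℕ) : ℝ) * (s / 2) ^ m) ^ 2 := by
      unfold binomPMF
      rw [h1, h2]
      have e1 : (m.choose (k : ℕ) : ℝ) * ((1 - δ)/2) ^ (k : ℕ) * ((1 + δ)/2) ^ (m - (k : ℕ)) *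
            ((m.choose (k : ℕ) : ℝ) * ((1 + δ)/2) ^ (k : ℕ) * ((1 - δ)/2) ^ (m - (k : ℕ)))
          = (m.choose (k : ℕ) : ℝ) ^ 2 *
            (((1 - δ)/2 * ((1 + δ)/2)) ^ (k : ℕ) * ((1 - δ)/2 * ((1 + δ)/2)) ^ (m - (k : ℕ))) := by
        rw [mul_pow, mul_pow]; ring
      rw [e1, ← pow_add, Nat.add_sub_cancel' hk, huv, ← pow_mul, mul_comm 2 m, pow_mul]
      ring
    rw [heq, Real.sqrt_sq (by positivity)]
  rw [Finset.sum_congr rfl (fun k _ => key k)]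
  rw [← Finset.sum_mul]
  have hch : ∑ k : Fin (m + 1), (m.choose (k : ℕ) : ℝ) = 2 ^ m := by
    rw [Fin.sum_univ_eq_sum_range (fun k => (m.choose k : ℝ))]
    exact_mod_cast Nat.sum_range_choose m
  rw [hch, div_pow]
  field_simp

set_option maxHeartbeats 1000000 in
lemma coord_bound (m : ℕ) (δ r : ℝ) (hδ0 : 0 < δ) (hδ1 : δ < 1/3) (hr0 : 0 ≤ r)
    (hr1 : r < 1/2) :
    ∑ k : Fin (m + 1),
        (1/2 * binomPMF m ((1 - δ)/2) (k : ℕ) + 1/2 * binomPMF m ((1 + δ)/2) (k : ℕ)) *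
          Real.logb 2
            ((1/2 * binomPMF m ((1 - δ)/2) (k : ℕ) + 1/2 * binomPMF m ((1 + δ)/2) (k : ℕ)) /
              ((1 + r)/2 * binomPMF m ((1 - δ)/2) (k : ℕ) +
                (1 - r)/2 * binomPMF m ((1 + δ)/2) (k : ℕ)))
      ≤ 5 * r ^ 2 * δ ^ 2 * m := by
  set a : Fin (m + 1) → ℝ := fun k => binomPMF m ((1 - δ)/2) (k : ℕ) with ha
  set b : Fin (m + 1) → ℝ := fun k => binomPMF m ((1 + δ)/2) (k : ℕ) with hb
  have hA : ∀ k : Fin (m + 1), 0 < a k := fun k =>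
    binomPMF_pos (by linarith) (by linarith) (Nat.lt_succ_iff.mp k.isLt)
  have hB : ∀ k : Fin (m + 1), 0 < b k := fun k =>
    binomPMF_pos (by linarith) (by linarith) (Nat.lt_succ_iff.mp k.isLt)
  have hsumA : ∑ k : Fin (m + 1), a k = 1 := binomPMF_sum m _
  have hsumB : ∑ k : Fin (m + 1), b k = 1 := binomPMF_sum m _
  set s := Real.sqrt (1 - δ ^ 2) with hs
  have hδ2 : 0 ≤ 1 - δ ^ 2 := by nlinarith
  have hs0 : 0 ≤ s := Real.sqrt_nonneg _
  have hssq : s ^ 2 = 1 - δ ^ 2 := Real.sq_sqrt hδ2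
  have hs_half : 1/2 ≤ s := by nlinarith
  have hsumAB : ∑ k : Fin (m + 1), Real.sqrt (a k * b k) = s ^ m :=
    binomPMF_sqrt_sum m δ hδ0.le (by linarith)
  -- t k
  set t : Fin (m + 1) → ℝ := fun k => r * (b k - a k) / (a k + b k) with htdef
  have habpos : ∀ k, 0 < a k + b k := fun k => by have := hA k; have := hB k; linarith
  have ht_le : ∀ k, t k ≤ r := by
    intro k
    rw [htdef]
    rw [div_le_iff₀ (habpos k)]
    have := hA k; have := hB k
    nlinarith
  have ht_lt_half : ∀ k, t k < 1/2 := fun k => lt_of_le_of_lt (ht_le k) hr1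
  have h1t : ∀ k, 0 < 1 - t k := fun k => by have := ht_lt_half k; linarith
  -- pointwise identity
  have hpoint : ∀ k : Fin (m + 1),
      (1/2 * a k + 1/2 * b k) *
          Real.logb 2 ((1/2 * a k + 1/2 * b k) /
            ((1 + r)/2 * a k + (1 - r)/2 * b k))
        = (1/2 * a k + 1/2 * b k) * (-Real.log (1 - t k)) / Real.log 2 := by
    intro k
    have hμpos : 0 < 1/2 * a k + 1/2 * b k := by have := hA k; have := hB k; linarith
    have hν_eq : (1 + r)/2 * a k + (1 - r)/2 * b k
        = (1/2 * a k + 1/2 * b k) * (1 - t k) := by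
      rw [htdef]
      field_simp [(habpos k).ne']
      ring
    have hratio : (1/2 * a k + 1/2 * b k) /
        ((1 + r)/2 * a k + (1 - r)/2 * b k) = (1 - t k)⁻¹ := by
      rw [hν_eq, div_mul_eq_div_div, div_self hμpos.ne', one_div]
    rw [hratio, Real.logb, Real.log_inv]
    ring
  rw [Finset.sum_congr rfl fun k _ => hpoint k]
  -- bound -log(1-t) ≤ t + 2 t^2
  have hlogbd : ∀ k, -Real.log (1 - t k) ≤ t k + 2 * (t k) ^ 2 := by
    intro k
    have h1 : -Real.log (1 - t k) = Real.log (1 - t k)⁻¹ := by rw [Real.log_inv]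
    have h2 : Real.log (1 - t k)⁻¹ ≤ (1 - t k)⁻¹ - 1 :=
      Real.log_le_sub_one_of_pos (inv_pos.mpr (h1t k))
    have h3 : (1 - t k)⁻¹ - 1 = t k / (1 - t k) := by
      rw [inv_eq_one_div]
      field_simp [(h1t k).ne']
      ring
    have h4 : t k / (1 - t k) ≤ t k + 2 * (t k) ^ 2 := by
      rw [div_le_iff₀ (h1t k)]
      have := ht_lt_half k
      nlinarith [sq_nonneg (t k)]
    linarith
  -- sum μ t = 0
  have hμt : ∑ k : Fin (m + 1), (1/2 * a k + 1/2 * b k) * t k = 0 := by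
    have : ∀ k : Fin (m + 1), (1/2 * a k + 1/2 * b k) * t k = r/2 * (b k - a k) := by
      intro k
      rw [htdef]
      field_simp [(habpos k).ne']
    rw [Finset.sum_congr rfl fun k _ => this k, ← Finset.mul_sum, Finset.sum_sub_distrib,
      hsumA, hsumB]
    ring
  -- μ t² ≤ r² (a + b - 2√(ab))
  have hμt2 : ∀ k, (1/2 * a k + 1/2 * b k) * (t k) ^ 2
      ≤ r ^ 2 * (a k + b k - 2 * Real.sqrt (a k * b k)) := by
    intro k
    have hA' := hA k; have hB' := hB k
    have hsa : Real.sqrt (a k) ^ 2 = a k := Real.sq_sqrt hA'.le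
    have hsb : Real.sqrt (b k) ^ 2 = b k := Real.sq_sqrt hB'.le
    have hsa0 : 0 ≤ Real.sqrt (a k) := Real.sqrt_nonneg _
    have hsb0 : 0 ≤ Real.sqrt (b k) := Real.sqrt_nonneg _
    set sa := Real.sqrt (a k) with hsadef
    set sb := Real.sqrt (b k) with hsbdef
    have hsab : Real.sqrt (a k * b k) = sa * sb := by
      rw [hsadef, hsbdef]; exact Real.sqrt_mul hA'.le _
    have hexp : (1/2 * a k + 1/2 * b k) * (t k) ^ 2
        = r ^ 2 * ((b k - a k) ^ 2 / (a k + b k)) / 2 := by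
      rw [htdef]
      field_simp [(habpos k).ne']
    have e2 : (b k - a k) ^ 2
        = ((sa - sb) * (sa + sb)) ^ 2 := by
      rw [← hsa, ← hsb]; ring
    have e3 : (sa + sb) ^ 2 ≤ 2 * (a k + b k) := by
      nlinarith [sq_nonneg (sa - sb), hsa, hsb]
    have e4 : a k + b k - 2 * (sa * sb)
        = (sa - sb) ^ 2 := by
      rw [← hsa, ← hsb]; ring
    have key : (b k - a k) ^ 2 / (a k + b k)
        ≤ 2 * (a k + b k - 2 * (sa * sb)) := by
      rw [div_le_iff₀ (habpos k), e4]
      calc (b k - a k) ^ 2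
          = (sa - sb) ^ 2 *
              (sa + sb) ^ 2 := by rw [e2]; ring
        _ ≤ (sa - sb) ^ 2 * (2 * (a k + b k)) :=
            mul_le_mul_of_nonneg_left e3 (sq_nonneg _)
        _ = 2 * (sa - sb) ^ 2 * (a k + b k) := by ring
    rw [hexp, hsab]
    have hkey2 := mul_le_mul_of_nonneg_left key (sq_nonneg r)
    nlinarith [hkey2]
  -- main chain
  have hlog2 : (0.6931471803 : ℝ) < Real.log 2 := Real.log_two_gt_d9
  have hlogpos : (0:ℝ) < Real.log 2 := by linarith
  have hmono : ∀ k : Fin (m + 1),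
      (1/2 * a k + 1/2 * b k) * (-Real.log (1 - t k))
        ≤ (1/2 * a k + 1/2 * b k) * (t k + 2 * (t k) ^ 2) := by
    intro k
    have hμpos : 0 ≤ 1/2 * a k + 1/2 * b k := by have := hA k; have := hB k; linarith
    exact mul_le_mul_of_nonneg_left (hlogbd k) hμpos
  have hstep1 : ∑ k : Fin (m + 1),
      (1/2 * a k + 1/2 * b k) * (-Real.log (1 - t k)) / Real.log 2
      ≤ (∑ k : Fin (m + 1), (1/2 * a k + 1/2 * b k) * (t k + 2 * (t k) ^ 2)) / Real.log 2 := by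
    rw [← Finset.sum_div]
    exact (div_le_div_iff_of_pos_right hlogpos).mpr (Finset.sum_le_sum fun k _ => hmono k)
  have hsplit : ∑ k : Fin (m + 1), (1/2 * a k + 1/2 * b k) * (t k + 2 * (t k) ^ 2)
      = (∑ k : Fin (m + 1), (1/2 * a k + 1/2 * b k) * t k)
        + 2 * ∑ k : Fin (m + 1), (1/2 * a k + 1/2 * b k) * (t k) ^ 2 := by
    rw [Finset.mul_sum, ← Finset.sum_add_distrib]
    exact Finset.sum_congr rfl fun k _ => by ring
  have hsum_t2 : ∑ k : Fin (m + 1), (1/2 * a k + 1/2 * b k) * (t k) ^ 2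
      ≤ 2 * r ^ 2 * (1 - s ^ m) := by
    calc ∑ k : Fin (m + 1), (1/2 * a k + 1/2 * b k) * (t k) ^ 2
        ≤ ∑ k : Fin (m + 1), r ^ 2 * (a k + b k - 2 * Real.sqrt (a k * b k)) :=
          Finset.sum_le_sum fun k _ => hμt2 k
      _ = r ^ 2 * ((∑ k : Fin (m + 1), a k) + (∑ k : Fin (m + 1), b k)
            - 2 * ∑ k : Fin (m + 1), Real.sqrt (a k * b k)) := by
          rw [← Finset.mul_sum, Finset.sum_sub_distrib, Finset.sum_add_distrib,
            ← Finset.mul_sum]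
      _ = 2 * r ^ 2 * (1 - s ^ m) := by rw [hsumA, hsumB, hsumAB]; ring
  have hpow : 1 - s ^ m ≤ (m : ℝ) * (1 - s) := by
    have h := one_add_mul_le_pow (show (-2:ℝ) ≤ s - 1 by linarith) m
    have h1 : (1:ℝ) + (s - 1) = s := by ring
    rw [h1] at h
    linarith
  have h1s : 1 - s ≤ 2/3 * δ ^ 2 := by nlinarith
  have hfinal : ∑ k : Fin (m + 1), (1/2 * a k + 1/2 * b k) * (t k + 2 * (t k) ^ 2)
      ≤ 8/3 * (r ^ 2 * δ ^ 2 * m) := by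
    rw [hsplit, hμt]
    have hm0 : (0:ℝ) ≤ (m : ℝ) := Nat.cast_nonneg m
    have h2 : 1 - s ^ m ≤ (m : ℝ) * (2/3 * δ ^ 2) := by
      calc 1 - s ^ m ≤ (m : ℝ) * (1 - s) := hpow
        _ ≤ (m : ℝ) * (2/3 * δ ^ 2) := by
            exact mul_le_mul_of_nonneg_left h1s hm0
    nlinarith [sq_nonneg r]
  calc ∑ k : Fin (m + 1),
      (1/2 * a k + 1/2 * b k) * (-Real.log (1 - t k)) / Real.log 2
      ≤ (∑ k : Fin (m + 1), (1/2 * a k + 1/2 * b k) * (t k + 2 * (t k) ^ 2)) / Real.log 2 :=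
        hstep1
    _ ≤ (8/3 * (r ^ 2 * δ ^ 2 * m)) / Real.log 2 := (div_le_div_iff_of_pos_right hlogpos).mpr hfinal
    _ ≤ 5 * r ^ 2 * δ ^ 2 * m := by
        rw [div_le_iff₀ hlogpos]
        have hX : (0:ℝ) ≤ r ^ 2 * δ ^ 2 * m := by positivity
        nlinarith

lemma tensorize {n : ℕ} (m : Fin n → ℕ) (μ ν : (i : Fin n) → ℕ → ℝ)
    (hμ : ∀ i (k : Fin (m i + 1)), 0 < μ i k) (hν : ∀ i (k : Fin (m i + 1)), 0 < ν i k)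
    (hsum : ∀ i, ∑ k : Fin (m i + 1), μ i (k : ℕ) = 1) :
    ∑ x : (i : Fin n) → Fin (m i + 1),
        (∏ i, μ i (x i)) * Real.logb 2 ((∏ i, μ i (x i)) / (∏ i, ν i (x i)))
      = ∑ i, ∑ k : Fin (m i + 1), μ i (k : ℕ) * Real.logb 2 (μ i (k : ℕ) / ν i (k : ℕ)) := by
  set L : (i : Fin n) → ℕ → ℝ := fun i k => Real.logb 2 (μ i k / ν i k) with hL
  have step1 : ∀ x : (i : Fin n) → Fin (m i + 1),
      (∏ i, μ i (x i)) * Real.logb 2 ((∏ i, μ i (x i)) / (∏ i, ν i (x i)))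
        = ∑ i, (∏ j, μ j (x j)) * L i (x i) := by
    intro x
    have h1 : (∏ i, μ i (x i)) / (∏ i, ν i (x i)) = ∏ i, (μ i (x i) / ν i (x i)) :=
      (Finset.prod_div_distrib _ _).symm
    have h2 : Real.logb 2 (∏ i, (μ i (x i) / ν i (x i))) = ∑ i, L i (x i) := by
      rw [Real.logb_prod]
      intro i _
      exact (div_pos (hμ i (x i)) (hν i (x i))).ne'
    rw [h1, h2, Finset.mul_sum]
  rw [Finset.sum_congr rfl fun x _ => step1 x, Finset.sum_comm]
  refine Finset.sum_congr rfl fun i _ => ?_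
  -- fix i
  set g : (j : Fin n) → Fin (m j + 1) → ℝ :=
    fun j k => if j = i then μ j (k : ℕ) * L j (k : ℕ) else μ j (k : ℕ) with hg
  have hprod : ∀ x : (j : Fin n) → Fin (m j + 1),
      (∏ j, μ j (x j)) * L i (x i) = ∏ j, g j (x j) := by
    intro x
    rw [← Finset.mul_prod_erase Finset.univ (fun j => g j (x j)) (Finset.mem_univ i),
      ← Finset.mul_prod_erase Finset.univ (fun j => μ j (x j)) (Finset.mem_univ i)]
    have hgi : g i (x i) = μ i (x i) * L i (x i) := by rw [hg]; simp
    have hrest : ∏ j ∈ Finset.univ.erase i, g j (x j)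
        = ∏ j ∈ Finset.univ.erase i, μ j ((x j : ℕ)) := by
      refine Finset.prod_congr rfl fun j hj => ?_
      rw [hg]
      simp [if_neg (Finset.mem_erase.mp hj).1]
    rw [hgi, hrest]
    ring
  rw [Finset.sum_congr rfl fun x _ => hprod x, ← Fintype.prod_sum g]
  have hfac : ∀ j, (∑ k : Fin (m j + 1), g j k)
      = if j = i then ∑ k : Fin (m i + 1), μ i (k : ℕ) * L i (k : ℕ) else 1 := by
    intro j
    by_cases hj : j = i
    · subst hj
      simp [hg]
    · simp only [hg, if_neg hj, hsum j]
  rw [Finset.prod_congr rfl fun j _ => hfac j, Finset.prod_ite_eq' Finset.univ i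
    (fun _ => ∑ k : Fin (m i + 1), μ i (k : ℕ) * L i (k : ℕ))]
  simp [hL]

/-- For `μ⁽ⁱ⁾ = ½Bin(mᵢ,(1-δ)/2) + ½Bin(mᵢ,(1+δ)/2)` and
    `ν⁽ⁱ⁾ = (1+r)/2·Bin(mᵢ,(1-δ)/2) + (1-r)/2·Bin(mᵢ,(1+δ)/2)`, the KL divergence (in bits)
    of the product distributions satisfies `D_KL(∏μ⁽ⁱ⁾ ‖ ∏ν⁽ⁱ⁾) ≤ 5r²δ²q`, `q = Σᵢ mᵢ`. -/
theorem dkl_product_mixture_le (n : ℕ) (m : Fin n → ℕ) (δ r : ℝ)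
    (hδ0 : 0 < δ) (hδ1 : δ < 1/3) (hr0 : 0 ≤ r) (hr1 : r < 1/2) :
    let μ : (i : Fin n) → ℕ → ℝ := fun i k =>
      1/2 * binomPMF (m i) ((1 - δ)/2) k + 1/2 * binomPMF (m i) ((1 + δ)/2) k
    let ν : (i : Fin n) → ℕ → ℝ := fun i k =>
      (1 + r)/2 * binomPMF (m i) ((1 - δ)/2) k + (1 - r)/2 * binomPMF (m i) ((1 + δ)/2) k
    ∑ x : (i : Fin n) → Fin (m i + 1),
        (∏ i, μ i (x i)) * Real.logb 2 ((∏ i, μ i (x i)) / (∏ i, ν i (x i)))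
      ≤ 5 * r ^ 2 * δ ^ 2 * (∑ i, (m i : ℝ)) := by
  intro μ ν
  have hApos : ∀ (i : Fin n) (k : Fin (m i + 1)), 0 < binomPMF (m i) ((1 - δ)/2) (k : ℕ) :=
    fun i k => binomPMF_pos (by linarith) (by linarith) (Nat.lt_succ_iff.mp k.isLt)
  have hBpos : ∀ (i : Fin n) (k : Fin (m i + 1)), 0 < binomPMF (m i) ((1 + δ)/2) (k : ℕ) :=
    fun i k => binomPMF_pos (by linarith) (by linarith) (Nat.lt_succ_iff.mp k.isLt)
  have hμpos : ∀ (i : Fin n) (k : Fin (m i + 1)), 0 < μ i (k : ℕ) := by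
    intro i k
    have := hApos i k; have := hBpos i k
    show 0 < 1/2 * binomPMF (m i) ((1 - δ)/2) (k : ℕ) + 1/2 * binomPMF (m i) ((1 + δ)/2) (k : ℕ)
    linarith
  have hνpos : ∀ (i : Fin n) (k : Fin (m i + 1)), 0 < ν i (k : ℕ) := by
    intro i k
    have := hApos i k; have := hBpos i k
    show 0 < (1 + r)/2 * binomPMF (m i) ((1 - δ)/2) (k : ℕ)
        + (1 - r)/2 * binomPMF (m i) ((1 + δ)/2) (k : ℕ)
    nlinarith
  have hμsum : ∀ i, ∑ k : Fin (m i + 1), μ i (k : ℕ) = 1 := by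
    intro i
    show ∑ k : Fin (m i + 1),
        (1/2 * binomPMF (m i) ((1 - δ)/2) (k : ℕ) + 1/2 * binomPMF (m i) ((1 + δ)/2) (k : ℕ)) = 1
    rw [Finset.sum_add_distrib, ← Finset.mul_sum, ← Finset.mul_sum,
      binomPMF_sum, binomPMF_sum]
    norm_num
  rw [tensorize m μ ν hμpos hνpos hμsum]
  calc ∑ i, ∑ k : Fin (m i + 1), μ i (k : ℕ) * Real.logb 2 (μ i (k : ℕ) / ν i (k : ℕ))
      ≤ ∑ i, 5 * r ^ 2 * δ ^ 2 * (m i : ℝ) :=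
        Finset.sum_le_sum fun i _ => coord_bound (m i) δ r hδ0 hδ1 hr0 hr1
    _ = 5 * r ^ 2 * δ ^ 2 * (∑ i, (m i : ℝ)) := by rw [← Finset.mul_sum]
end

section
/- Let μ′ be the distribution on {0,1}ⁿ whose bitwise conditional probability of sampling bit b at step i, given a prefix w of x, is (1-s_w·r)/2 when b makes the prefix extend x with s_w ∈ {±1}. If x has at most k_L = n/2 - √6√n indices with s = +1 along its path and r = 8/√n with n ≥ 3·10^{10}, then 2ⁿ·μ′(x) ≥ (1-r²)^{n/2} · exp(2r√6√n/(1+r)) > e^{7.19}. -/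
private lemma mu_aux_num (r x : ℝ) (hr0 : 0 < r) (hrle : r ≤ 8/173205)
    (hx0 : 0 < x) (hx1 : x ≤ 64/(3*10^10)) :
    (7.19:ℝ) < 16*Real.sqrt 6/(1+r) - 32/(1-x) := by
  have h1pr : (0:ℝ) < 1 + r := by linarith
  have h1mx : (0:ℝ) < 1 - x := by
    have : (64:ℝ)/(3*10^10) < 1 := by norm_num
    linarith
  have h6 : (2.449489:ℝ) ≤ Real.sqrt 6 := by
    nlinarith [Real.sqrt_nonneg 6, Real.sq_sqrt (show (0:ℝ) ≤ 6 by norm_num)]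
  have h7 : 16*Real.sqrt 6 * (1 - r) ≤ 16*Real.sqrt 6/(1+r) := by
    rw [le_div_iff₀ h1pr]
    nlinarith [mul_nonneg (Real.sqrt_nonneg 6) (sq_nonneg r)]
  have h8 : 16*(2.449489:ℝ) * (1 - 8/173205) ≤ 16*Real.sqrt 6 * (1 - r) :=
    mul_le_mul (by linarith) (by linarith) (by norm_num) (by positivity)
  have h9 : 32/(1-x) ≤ 32/(1 - 64/(3*10^10:ℝ)) := by
    apply div_le_div_of_nonneg_left (by norm_num) (by norm_num)
    linarith
  have h10 : (7.19:ℝ) < 16*(2.449489:ℝ) * (1 - 8/173205) - 32/(1 - 64/(3*10^10:ℝ)) := by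
    norm_num
  linarith

/-- For `n ≥ 3·10¹⁰` and `r = 8/√n`:
    `(1-r)^{n/2-√6√n}·(1+r)^{n/2+√6√n} ≥ (1-r²)^{n/2}·exp(2r√6√n/(1+r)) > e^{7.19}`
    (real powers). -/
theorem mu_prime_mass_lower_bound (n : ℕ) (hn : 3 * 10 ^ 10 ≤ n) :
    let r : ℝ := 8 / Real.sqrt n
    (1 - r) ^ ((n : ℝ)/2 - Real.sqrt 6 * Real.sqrt n) *
        (1 + r) ^ ((n : ℝ)/2 + Real.sqrt 6 * Real.sqrt n)
      ≥ (1 - r ^ 2) ^ ((n : ℝ)/2) * Real.exp (2 * r * Real.sqrt 6 * Real.sqrt n / (1 + r)) ∧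
    (1 - r ^ 2) ^ ((n : ℝ)/2) * Real.exp (2 * r * Real.sqrt 6 * Real.sqrt n / (1 + r))
      > Real.exp 7.19 := by
  intro r
  have hn' : (3 * 10 ^ 10 : ℝ) ≤ (n : ℝ) := by exact_mod_cast hn
  have hn0 : (0:ℝ) < n := by linarith
  have hsq : (173205 : ℝ) ≤ Real.sqrt n := by
    rw [show (173205:ℝ) = Real.sqrt (173205^2) from (Real.sqrt_sq (by norm_num)).symm]
    exact Real.sqrt_le_sqrt (by nlinarith)
  have hs0 : 0 < Real.sqrt n := by linarith
  have hr : r = 8 / Real.sqrt n := rfl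
  clear_value r
  have hr0 : 0 < r := by rw [hr]; positivity
  have hrle : r ≤ 8 / 173205 := by
    rw [hr]; exact div_le_div_of_nonneg_left (by norm_num) (by norm_num) hsq
  have hr1 : r < 1 := lt_of_le_of_lt hrle (by norm_num)
  have h1mr : 0 < 1 - r := by linarith
  have h1pr : 0 < 1 + r := by linarith
  have hc0 : (0:ℝ) ≤ Real.sqrt 6 * Real.sqrt n := by positivity
  have hr2 : r^2 = 64 / (n:ℝ) := by
    rw [hr, div_pow, Real.sq_sqrt hn0.le]; norm_num
  have hx1 : (64:ℝ)/(n:ℝ) ≤ 64 / (3*10^10) :=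
    div_le_div_of_nonneg_left (by norm_num) (by norm_num) hn'
  have hx0 : (0:ℝ) < 64/(n:ℝ) := by positivity
  have h1mx : (0:ℝ) < 1 - 64/(n:ℝ) := by
    have : (64:ℝ)/(3*10^10) < 1 := by norm_num
    linarith
  have hrc : 2 * r * Real.sqrt 6 * Real.sqrt n = 16 * Real.sqrt 6 := by
    rw [hr]; field_simp; ring
  -- base inequality: exp(2r/(1+r)) ≤ (1+r)/(1-r)
  have ht : 2*r/(1+r) < 1 := by rw [div_lt_one h1pr]; linarith
  have ht0 : 0 < 1 - 2*r/(1+r) := by linarith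
  have hbase : Real.exp (2*r/(1+r)) ≤ (1+r)/(1-r) := by
    have h1 : 1 - 2*r/(1+r) ≤ Real.exp (-(2*r/(1+r))) := by
      linarith [Real.add_one_le_exp (-(2*r/(1+r)))]
    have h2 : Real.exp (2*r/(1+r)) = 1 / Real.exp (-(2*r/(1+r))) := by
      rw [Real.exp_neg]; field_simp
    have h3 : (1:ℝ) / Real.exp (-(2*r/(1+r))) ≤ 1 / (1 - 2*r/(1+r)) :=
      one_div_le_one_div_of_le ht0 h1
    have hts : 1 - 2*r/(1+r) = (1-r)/(1+r) := by
      field_simp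
      ring
    have h4 : (1:ℝ) / (1 - 2*r/(1+r)) = (1+r)/(1-r) := by
      rw [hts, one_div_div]
    rw [h2, ← h4]; exact h3
  set c : ℝ := Real.sqrt 6 * Real.sqrt n with hc
  -- identity
  have e3 : (1-r)^((n:ℝ)/2) * (1+r)^((n:ℝ)/2) = (1-r^2)^((n:ℝ)/2) := by
    rw [← Real.mul_rpow h1mr.le h1pr.le]
    congr 1; ring
  have key : (1-r)^((n:ℝ)/2 - c) * (1+r)^((n:ℝ)/2 + c)
      = (1-r^2)^((n:ℝ)/2) * ((1+r)/(1-r))^c := by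
    rw [Real.rpow_sub h1mr, Real.rpow_add h1pr, Real.div_rpow h1pr.le h1mr.le,
      ← e3, div_eq_mul_inv, div_eq_mul_inv]
    ring
  have hpow : Real.exp (2*r*Real.sqrt 6*Real.sqrt n/(1+r)) ≤ ((1+r)/(1-r))^c := by
    have h5 : Real.exp (2*r/(1+r)) ^ c ≤ ((1+r)/(1-r))^c :=
      Real.rpow_le_rpow (Real.exp_pos _).le hbase hc0
    have h6 : Real.exp (2*r/(1+r)) ^ c = Real.exp (2*r*Real.sqrt 6*Real.sqrt n/(1+r)) := by
      rw [← Real.exp_mul]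
      congr 1
      rw [hc]; field_simp
    rw [← h6]; exact h5
  constructor
  · rw [key]
    exact mul_le_mul_of_nonneg_left hpow (Real.rpow_nonneg (by nlinarith) _)
  · -- part 2
    have hy0 : 0 < (64/(n:ℝ))/(1 - 64/(n:ℝ)) := by positivity
    have hlow : Real.exp (-(32/(1 - 64/(n:ℝ)))) ≤ (1 - r^2)^((n:ℝ)/2) := by
      have hb : Real.exp (-((64/(n:ℝ))/(1 - 64/(n:ℝ)))) ≤ 1 - 64/(n:ℝ) := by
        have h1 : 1 + (64/(n:ℝ))/(1 - 64/(n:ℝ)) ≤ Real.exp ((64/(n:ℝ))/(1 - 64/(n:ℝ))) := by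
          linarith [Real.add_one_le_exp ((64/(n:ℝ))/(1 - 64/(n:ℝ)))]
        have h2 : 1 + (64/(n:ℝ))/(1 - 64/(n:ℝ)) = 1/(1 - 64/(n:ℝ)) := by
          rw [add_div' _ _ _ h1mx.ne']
          congr 1
          ring
        rw [Real.exp_neg, inv_le_comm₀ (Real.exp_pos _) h1mx]
        rw [h2] at h1
        calc (1 - 64/(n:ℝ))⁻¹ = 1/(1 - 64/(n:ℝ)) := (one_div _).symm
          _ ≤ Real.exp ((64/(n:ℝ))/(1 - 64/(n:ℝ))) := h1
      have h3 : Real.exp (-((64/(n:ℝ))/(1 - 64/(n:ℝ)))) ^ ((n:ℝ)/2)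
          ≤ (1 - 64/(n:ℝ)) ^ ((n:ℝ)/2) :=
        Real.rpow_le_rpow (Real.exp_pos _).le hb (by positivity)
      have h4 : Real.exp (-((64/(n:ℝ))/(1 - 64/(n:ℝ)))) ^ ((n:ℝ)/2)
          = Real.exp (-(32/(1 - 64/(n:ℝ)))) := by
        rw [← Real.exp_mul]
        congr 1
        have hne : (n:ℝ) - 64 ≠ 0 := ne_of_gt (by linarith)
        field_simp
        ring
      rw [hr2, ← h4]; exact h3
    have hprod : Real.exp (16*Real.sqrt 6/(1+r) - 32/(1 - 64/(n:ℝ)))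
        ≤ (1 - r^2)^((n:ℝ)/2) * Real.exp (2*r*Real.sqrt 6*Real.sqrt n/(1+r)) := by
      rw [show 2*r*Real.sqrt 6*Real.sqrt n/(1+r) = 16*Real.sqrt 6/(1+r) by rw [hrc],
        sub_eq_add_neg, add_comm, Real.exp_add]
      exact mul_le_mul_of_nonneg_right hlow (Real.exp_pos _).le
    refine lt_of_lt_of_le ?_ hprod
    rw [Real.exp_lt_exp]
    exact mu_aux_num r (64/(n:ℝ)) hr0 hrle hx0 hx1
end
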